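/- Eccentricity centrality violates Self-consistency: there exists a connected graph with vertices u, v and a bijection φ: N_u → N_v with f(w) ≤ f(φ(w)) for all w ∈ N_u and strict inequality for at least one w, yet f(u) ≥ f(v), where f(x) = (max_y d(x,y))^{-1}. -/

import Mathlib

/-- Eccentricity centrality `f(x) = (max_y d(x,y))⁻¹`. -/
noncomputable def eccCentrality {n : ℕ} (G : SimpleGraph (Fin n)) (x : Fin n) : ℝ :=
  ((Finset.univ.sup fun y => G.dist x y : ℕ) : ℝ)⁻¹

private def EL : List (Fin 5 × Fin 5) := [(0,2), (0,3), (0,4), (1,2), (1,3)]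

private def Gc : SimpleGraph (Fin 5) where
  Adj x y := (x, y) ∈ EL ∨ (y, x) ∈ EL
  symm := ⟨by intro x y; revert x y; decide⟩
  loopless := ⟨by intro x; revert x; decide⟩

private instance : DecidableRel Gc.Adj := fun a b =>
  inferInstanceAs (Decidable ((a, b) ∈ EL ∨ (b, a) ∈ EL))

private lemma lip (p : Fin 5 → ℤ) (h : ∀ a b, Gc.Adj a b → (p a - p b).natAbs ≤ 1)
    {x y : Fin 5} (w : Gc.Walk x y) : (p x - p y).natAbs ≤ w.length := by
  induction w with
  | nil => simp
  | @cons a b c h' w ih =>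
    have h1 := h a b h'
    have : (p a - p c).natAbs ≤ (p a - p b).natAbs + (p b - p c).natAbs := by
      have := Int.natAbs_add_le (p a - p b) (p b - p c)
      simpa using this
    simp only [SimpleGraph.Walk.length_cons]
    omega

private lemma Gc_conn : Gc.Connected := ⟨by decide⟩

private lemma dist_lower (p : Fin 5 → ℤ) (h : ∀ a b, Gc.Adj a b → (p a - p b).natAbs ≤ 1)
    (x y : Fin 5) : (p x - p y).natAbs ≤ Gc.dist x y := by
  obtain ⟨w, hw⟩ := (Gc_conn.preconnected x y).exists_walk_length_eq_dist
  exact hw ▸ lip p h w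

private def p1 : Fin 5 → ℤ := ![2, 0, 1, 1, 3]
private def p2 : Fin 5 → ℤ := ![1, 1, 0, 2, 2]

private lemma p1_lip : ∀ a b, Gc.Adj a b → (p1 a - p1 b).natAbs ≤ 1 := by decide
private lemma p2_lip : ∀ a b, Gc.Adj a b → (p2 a - p2 b).natAbs ≤ 1 := by decide

private def wk (a b : Fin 5) (h : Gc.Adj a b) : Gc.Walk a b := SimpleGraph.Walk.cons h .nil

-- eccentricity sup values
private lemma ecc0 : (Finset.univ.sup fun y => Gc.dist 0 y) = 2 := by
  apply le_antisymm
  · apply Finset.sup_le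
    intro y _
    fin_cases y
    · simp [Gc.dist_self]
    · have := Gc.dist_le ((wk 0 2 (by decide)).append (wk 2 1 (by decide)))
      simp [wk] at this
      exact le_trans this (by norm_num)
    · have := Gc.dist_le (wk 0 2 (by decide))
      simp [wk] at this
      exact le_trans this (by norm_num)
    · have := Gc.dist_le (wk 0 3 (by decide))
      simp [wk] at this
      exact le_trans this (by norm_num)
    · have := Gc.dist_le (wk 0 4 (by decide))
      simp [wk] at this
      exact le_trans this (by norm_num)
  · calc (2:ℕ) = (p1 0 - p1 1).natAbs := by decide
    _ ≤ Gc.dist 0 1 := dist_lower p1 p1_lip 0 1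
    _ ≤ _ := Finset.le_sup (Finset.mem_univ (1 : Fin 5))

private lemma ecc1 : (Finset.univ.sup fun y => Gc.dist 1 y) = 3 := by
  apply le_antisymm
  · apply Finset.sup_le
    intro y _
    fin_cases y
    · have := Gc.dist_le ((wk 1 2 (by decide)).append (wk 2 0 (by decide)))
      simp [wk] at this
      exact le_trans this (by norm_num)
    · simp [Gc.dist_self]
    · have := Gc.dist_le (wk 1 2 (by decide))
      simp [wk] at this
      exact le_trans this (by norm_num)
    · have := Gc.dist_le (wk 1 3 (by decide))
      simp [wk] at this
      exact le_trans this (by norm_num)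
    · have := Gc.dist_le (((wk 1 2 (by decide)).append (wk 2 0 (by decide))).append
        (wk 0 4 (by decide)))
      simp [wk] at this
      exact le_trans this (by norm_num)
  · calc (3:ℕ) = (p1 1 - p1 4).natAbs := by decide
    _ ≤ Gc.dist 1 4 := dist_lower p1 p1_lip 1 4
    _ ≤ _ := Finset.le_sup (Finset.mem_univ (4 : Fin 5))

private lemma ecc2 : (Finset.univ.sup fun y => Gc.dist 2 y) = 2 := by
  apply le_antisymm
  · apply Finset.sup_le
    intro y _
    fin_cases y
    · have := Gc.dist_le (wk 2 0 (by decide))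
      simp [wk] at this
      exact le_trans this (by norm_num)
    · have := Gc.dist_le (wk 2 1 (by decide))
      simp [wk] at this
      exact le_trans this (by norm_num)
    · simp [Gc.dist_self]
    · have := Gc.dist_le ((wk 2 1 (by decide)).append (wk 1 3 (by decide)))
      simp [wk] at this
      exact le_trans this (by norm_num)
    · have := Gc.dist_le ((wk 2 0 (by decide)).append (wk 0 4 (by decide)))
      simp [wk] at this
      exact le_trans this (by norm_num)
  · calc (2:ℕ) = (p2 2 - p2 3).natAbs := by decide
    _ ≤ Gc.dist 2 3 := dist_lower p2 p2_lip 2 3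
    _ ≤ _ := Finset.le_sup (Finset.mem_univ (3 : Fin 5))

private lemma ecc3 : (Finset.univ.sup fun y => Gc.dist 3 y) = 2 := by
  apply le_antisymm
  · apply Finset.sup_le
    intro y _
    fin_cases y
    · have := Gc.dist_le (wk 3 0 (by decide))
      simp [wk] at this
      exact le_trans this (by norm_num)
    · have := Gc.dist_le (wk 3 1 (by decide))
      simp [wk] at this
      exact le_trans this (by norm_num)
    · have := Gc.dist_le ((wk 3 1 (by decide)).append (wk 1 2 (by decide)))
      simp [wk] at this
      exact le_trans this (by norm_num)
    · simp [Gc.dist_self]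
    · have := Gc.dist_le ((wk 3 0 (by decide)).append (wk 0 4 (by decide)))
      simp [wk] at this
      exact le_trans this (by norm_num)
  · calc (2:ℕ) = (p2 3 - p2 2).natAbs := by decide
    _ ≤ Gc.dist 3 2 := dist_lower p2 p2_lip 3 2
    _ ≤ _ := Finset.le_sup (Finset.mem_univ (2 : Fin 5))

private lemma f0 : eccCentrality Gc 0 = (2:ℝ)⁻¹ := by rw [eccCentrality, ecc0]; norm_num
private lemma f1 : eccCentrality Gc 1 = (3:ℝ)⁻¹ := by rw [eccCentrality, ecc1]; norm_num
private lemma f2 : eccCentrality Gc 2 = (2:ℝ)⁻¹ := by rw [eccCentrality, ecc2]; norm_num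
private lemma f3 : eccCentrality Gc 3 = (2:ℝ)⁻¹ := by rw [eccCentrality, ecc3]; norm_num

/-- Eccentricity centrality violates Self-consistency: there is a connected graph with
vertices `u, v` and a bijection `φ : N_u → N_v` with `f(w) ≤ f(φ(w))` for all `w ∈ N_u`
and strict inequality for at least one `w`, yet `f(u) ≥ f(v)`. -/
theorem eccentricity_violates_self_consistency :
    ∃ (n : ℕ) (G : SimpleGraph (Fin n)) (u v : Fin n),
      G.Connected ∧
      ∃ φ : {w // G.Adj u w} ≃ {w // G.Adj v w},
        (∀ w : {w // G.Adj u w}, eccCentrality G w ≤ eccCentrality G (φ w)) ∧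
        (∃ w : {w // G.Adj u w}, eccCentrality G w < eccCentrality G (φ w)) ∧
        eccCentrality G v ≤ eccCentrality G u := by
  refine ⟨5, Gc, 2, 1, Gc_conn, ?_⟩
  have hcard : Fintype.card {w // Gc.Adj 2 w} = Fintype.card {w // Gc.Adj 1 w} := by decide
  refine ⟨Fintype.equivOfCardEq hcard, ?_, ?_, ?_⟩
  · intro w
    have hNu : ∀ z : Fin 5, Gc.Adj 2 z → z = 0 ∨ z = 1 := by decide
    have hNv : ∀ z : Fin 5, Gc.Adj 1 z → z = 2 ∨ z = 3 := by decide
    have h1 : eccCentrality Gc (w : Fin 5) ≤ (2:ℝ)⁻¹ := by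
      rcases hNu w w.2 with h | h <;> rw [h] <;> [rw [f0]; rw [f1]] <;> norm_num
    have h2 : eccCentrality Gc ((Fintype.equivOfCardEq hcard w : Fin 5)) = (2:ℝ)⁻¹ := by
      rcases hNv _ (Fintype.equivOfCardEq hcard w).2 with h | h <;> rw [h] <;>
        [exact f2; exact f3]
    rw [h2]; exact h1
  · refine ⟨⟨1, by decide⟩, ?_⟩
    have hNv : ∀ z : Fin 5, Gc.Adj 1 z → z = 2 ∨ z = 3 := by decide
    have h2 : eccCentrality Gc ((Fintype.equivOfCardEq hcard ⟨1, by decide⟩ : Fin 5)) = (2:ℝ)⁻¹ := by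
      rcases hNv _ (Fintype.equivOfCardEq hcard ⟨1, by decide⟩).2 with h | h <;> rw [h] <;>
        [exact f2; exact f3]
    rw [h2]
    show eccCentrality Gc 1 < _
    rw [f1]; norm_num
  · rw [f1, f2]; norm_num
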